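/- arXiv:2007.07991 — 3 statements merged into one kernel-verified Lean document; each statement's English description precedes it below -/
import Mathlib

section
/- For every real r with 0 < r ≤ 1, there exists a subset F of ℝ with Hausdorff dimension r, Lebesgue measure 0, and topological (small inductive) dimension 0; in particular F is a fractal in Mandelbrot's sense when r > 0. -/
open scoped ENNReal
open MeasureTheory Set

universe u

/-- `IndLE n X t` means the small inductive dimension of `X` is `≤ n - 1`. -/
def IndLE : ℕ → (X : Type u) → TopologicalSpace X → Prop
  | 0, X, _ => IsEmpty X
  | n + 1, X, t => by
      letI := t
      exact ∃ B : Set (Set X), TopologicalSpace.IsTopologicalBasis B ∧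
        ∀ U ∈ B, IndLE n (frontier U) inferInstance

/-- Small inductive (topological) dimension, as an extended nonnegative real:
the least `k : ℕ` such that `ind X ≤ k` (`⊤` if there is no finite bound). -/
noncomputable def indDim (X : Type u) [t : TopologicalSpace X] : ℝ≥0∞ :=
  sInf ((fun k : ℕ => (k : ℝ≥0∞)) '' {k : ℕ | IndLE (k + 1) X t})


namespace ThinFractal

open Filter Topology
open scoped NNReal

abbrev G := ℕ → ZMod 2

noncomputable def term (β : ℝ) (f : G) (k : ℕ) : ℝ := if f k = 1 then (1-β)*β^k else 0

noncomputable def gmap (β : ℝ) (f : G) : ℝ := ∑' k, term β f k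

noncomputable def cantorSet (β : ℝ) : Set ℝ := Set.range (gmap β)

noncomputable def preSum (β : ℝ) (n : ℕ) (f : G) : ℝ := ∑ i ∈ Finset.range n, term β f i

noncomputable def tail (β : ℝ) (n : ℕ) (f : G) : ℝ := ∑' k, term β f (k + n)

variable {β : ℝ}

lemma term_nonneg (hβ0 : 0 < β) (hβ : β < 1/2) (f : G) (k : ℕ) : 0 ≤ term β f k := by
  have h1 : (0:ℝ) ≤ 1 - β := by linarith
  unfold term; split
  · exact mul_nonneg h1 (pow_nonneg hβ0.le k)
  · exact le_refl 0

lemma term_le (hβ0 : 0 < β) (hβ : β < 1/2) (f : G) (k : ℕ) : term β f k ≤ (1-β)*β^k := by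
  have h1 : (0:ℝ) ≤ 1 - β := by linarith
  unfold term; split
  · exact le_refl _
  · positivity

lemma summable_geom (hβ0 : 0 < β) (hβ : β < 1/2) : Summable (fun k : ℕ => (1-β)*β^k) :=
  (summable_geometric_of_lt_one hβ0.le (by linarith)).mul_left _

lemma summable_term (hβ0 : 0 < β) (hβ : β < 1/2) (f : G) : Summable (term β f) :=
  Summable.of_nonneg_of_le (term_nonneg hβ0 hβ f) (term_le hβ0 hβ f) (summable_geom hβ0 hβ)

lemma tail_nonneg (hβ0 : 0 < β) (hβ : β < 1/2) (n : ℕ) (f : G) : 0 ≤ tail β n f :=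
  tsum_nonneg fun k => term_nonneg hβ0 hβ f _

lemma tail_le (hβ0 : 0 < β) (hβ : β < 1/2) (n : ℕ) (f : G) : tail β n f ≤ β ^ n := by
  have h1 : Summable fun k : ℕ => (1-β)*β^(k+n) := by
    have : (fun k : ℕ => (1-β)*β^(k+n)) = fun k : ℕ => ((1-β)*β^n)*β^k := by
      funext k; rw [pow_add]; ring
    rw [this]
    exact (summable_geometric_of_lt_one hβ0.le (by linarith)).mul_left _
  have h2 : tail β n f ≤ ∑' k : ℕ, (1-β)*β^(k+n) := by
    apply Summable.tsum_le_tsum (fun k => term_le hβ0 hβ f (k+n))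
      ((summable_nat_add_iff n).2 (summable_term hβ0 hβ f)) h1
  refine h2.trans ?_
  have h3 : ∑' k : ℕ, (1-β)*β^(k+n) = ((1-β) * β^n) * ∑' k : ℕ, β^k := by
    rw [← tsum_mul_left]; congr 1; funext k; rw [pow_add]; ring
  rw [h3, tsum_geometric_of_lt_one hβ0.le (by linarith), div_eq_mul_inv] at *
  rw [mul_comm (1-β) (β^n), mul_assoc, mul_inv_cancel₀ (by linarith), mul_one]

lemma gmap_eq (hβ0 : 0 < β) (hβ : β < 1/2) (n : ℕ) (f : G) :
    gmap β f = preSum β n f + tail β n f :=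
  (Summable.sum_add_tsum_nat_add n (summable_term hβ0 hβ f)).symm

lemma gmap_mem (hβ0 : 0 < β) (hβ : β < 1/2) (n : ℕ) (f : G) :
    gmap β f ∈ Icc (preSum β n f) (preSum β n f + β ^ n) := by
  rw [gmap_eq hβ0 hβ n f]
  constructor
  · linarith [tail_nonneg hβ0 hβ n f]
  · linarith [tail_le hβ0 hβ n f]

lemma preSum_congr (n : ℕ) {f f' : G} (h : ∀ i < n, f i = f' i) :
    preSum β n f = preSum β n f' := by
  unfold preSum
  apply Finset.sum_congr rfl
  intro i hi
  unfold term
  rw [h i (Finset.mem_range.1 hi)]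

lemma gmap_sep (hβ0 : 0 < β) (hβ : β < 1/2) (n : ℕ) {f f' : G}
    (h : ∀ i < n, f i = f' i) (h1 : f n = 1) (h0 : f' n ≠ 1) :
    β ^ n * (1 - 2*β) ≤ gmap β f - gmap β f' := by
  have e1 := gmap_eq hβ0 hβ (n+1) f
  have e2 := gmap_eq hβ0 hβ (n+1) f'
  have p1 : preSum β (n+1) f = preSum β n f + (1-β)*β^n := by
    unfold preSum; rw [Finset.sum_range_succ]; unfold term; rw [if_pos h1]
  have p2 : preSum β (n+1) f' = preSum β n f' := by
    unfold preSum; rw [Finset.sum_range_succ]; unfold term; rw [if_neg h0, add_zero]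
  have p3 : preSum β n f = preSum β n f' := preSum_congr n h
  have t1 := tail_nonneg hβ0 hβ (n+1) f
  have t2 := tail_le hβ0 hβ (n+1) f'
  have hps : β^(n+1) = β^n * β := pow_succ β n
  nlinarith [pow_pos hβ0 n]

lemma zmod2_cases : ∀ x y : ZMod 2, x ≠ y → (x = 1 ∧ y ≠ 1) ∨ (y = 1 ∧ x ≠ 1) := by decide

lemma gmap_dist (hβ0 : 0 < β) (hβ : β < 1/2) {f f' : G} (hne : f ≠ f') :
    ∃ n, (∀ i < n, f i = f' i) ∧ f n ≠ f' n ∧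
      β ^ n * (1 - 2*β) ≤ |gmap β f - gmap β f'| := by
  have hex : ∃ k, f k ≠ f' k := by
    by_contra h
    push_neg at h
    exact hne (funext h)
  have hn : f (Nat.find hex) ≠ f' (Nat.find hex) := Nat.find_spec hex
  have hlt : ∀ i < Nat.find hex, f i = f' i := fun i hi => by
    by_contra h
    exact absurd hi (not_lt.2 (Nat.find_le h))
  refine ⟨Nat.find hex, hlt, hn, ?_⟩
  rcases zmod2_cases _ _ hn with ⟨h1, h0⟩ | ⟨h1, h0⟩
  · exact (gmap_sep hβ0 hβ _ hlt h1 h0).trans (le_abs_self _)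
  · refine (gmap_sep hβ0 hβ _ (fun i hi => (hlt i hi).symm) h1 h0).trans ?_
    rw [abs_sub_comm]; exact le_abs_self _

lemma continuous_gmap (hβ0 : 0 < β) (hβ : β < 1/2) : Continuous (gmap β) := by
  apply continuous_tsum (u := fun k => (1-β)*β^k)
  · intro k
    have h1 : Continuous fun z : ZMod 2 => if z = 1 then (1-β)*β^k else 0 :=
      continuous_of_discreteTopology
    exact h1.comp (continuous_apply k)
  · exact summable_geom hβ0 hβ
  · intro k f
    rw [Real.norm_eq_abs, abs_of_nonneg (term_nonneg hβ0 hβ f k)]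
    exact term_le hβ0 hβ f k

lemma isCompact_cantorSet (hβ0 : 0 < β) (hβ : β < 1/2) : IsCompact (cantorSet β) :=
  isCompact_range (continuous_gmap hβ0 hβ)

noncomputable def μG : Measure G := Measure.addHaarMeasure ⊤

instance : μG.IsAddLeftInvariant := by unfold μG; infer_instance

lemma μG_univ : μG Set.univ = 1 := by
  have := Measure.addHaarMeasure_self (G := G) (K₀ := ⊤)
  simpa [μG] using this

instance : IsProbabilityMeasure μG := ⟨μG_univ⟩

/-- cylinder sets -/
def Cyl (n : ℕ) (v : Fin n → ZMod 2) : Set G := {f | ∀ i : Fin n, f (i : ℕ) = v i}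

lemma measurableSet_Cyl (n : ℕ) (v : Fin n → ZMod 2) : MeasurableSet (Cyl n v) := by
  have : Cyl n v = ⋂ i : Fin n, (fun f : G => f (i : ℕ)) ⁻¹' {v i} := by
    ext f; simp [Cyl]
  rw [this]
  exact MeasurableSet.iInter fun i => (measurable_pi_apply _) (measurableSet_singleton _)

lemma Cyl_translate (n : ℕ) (v : Fin n → ZMod 2) :
    Cyl n v = (fun f : G => (fun i => if h : i < n then v ⟨i, h⟩ else 0) + f) ⁻¹' (Cyl n 0) := by
  ext f
  simp only [Cyl, mem_setOf_eq, mem_preimage, Pi.add_apply]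
  have key : ∀ x y : ZMod 2, (x + y = 0) ↔ y = x := by decide
  constructor
  · intro hf i
    rw [dif_pos i.isLt]
    simp only [Pi.zero_apply]
    rw [key]
    rw [hf i]
  · intro hf i
    have := hf i
    rw [dif_pos i.isLt] at this
    simp only [Pi.zero_apply] at this
    rw [key] at this
    simpa using this

lemma μG_Cyl (n : ℕ) (v : Fin n → ZMod 2) : μG (Cyl n v) = (2 ^ n)⁻¹ := by
  -- all cylinders have the same measure
  have hsame : ∀ v : Fin n → ZMod 2, μG (Cyl n v) = μG (Cyl n 0) := by
    intro v
    rw [Cyl_translate n v]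
    exact measure_preimage_add μG _ _
  -- they partition `univ`
  have hdisj : Pairwise (Function.onFun Disjoint fun v : Fin n → ZMod 2 => Cyl n v) := by
    intro v w hvw
    refine Set.disjoint_left.2 fun f hf hg => hvw (funext fun i => ?_)
    rw [← hf i, ← hg i]
  have hcover : ⋃ v : Fin n → ZMod 2, Cyl n v = univ := by
    refine eq_univ_of_forall fun f => mem_iUnion.2 ⟨fun i => f i, fun i => rfl⟩
  have hsum : ∑ v : Fin n → ZMod 2, μG (Cyl n v) = 1 := by
    have h := measure_iUnion (μ := μG) hdisj fun v => measurableSet_Cyl n v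
    rw [hcover, μG_univ, tsum_fintype] at h
    exact h.symm
  have hcard : (Fintype.card (Fin n → ZMod 2) : ℝ≥0∞) = 2 ^ n := by
    simp
  have h2 : (2 ^ n : ℝ≥0∞) * μG (Cyl n 0) = 1 := by
    rw [← hcard, ← nsmul_eq_mul, ← Finset.card_univ, ← Finset.sum_const, ← hsum]
    exact (Finset.sum_congr rfl fun w _ => hsame w).symm
  have hne : (2 ^ n : ℝ≥0∞) ≠ 0 := by positivity
  have hnt : (2 ^ n : ℝ≥0∞) ≠ ∞ := by
    exact ENNReal.pow_ne_top (by norm_num)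
  rw [hsame v]
  rw [← one_mul (μG (Cyl n 0)), ← ENNReal.inv_mul_cancel hne hnt, mul_assoc, h2, mul_one]

noncomputable def μc (β : ℝ) : Measure ℝ := Measure.map (gmap β) μG

variable {β : ℝ}

lemma measurable_gmap (hβ0 : 0 < β) (hβ : β < 1/2) : Measurable (gmap β) :=
  (continuous_gmap hβ0 hβ).measurable

lemma μc_cantor (hβ0 : 0 < β) (hβ : β < 1/2) : μc β (cantorSet β) = 1 := by
  rw [μc, Measure.map_apply (measurable_gmap hβ0 hβ)
    (isCompact_cantorSet hβ0 hβ).isClosed.measurableSet]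
  rw [cantorSet, Set.preimage_range, μG_univ]

/-- key bound: sets of small diameter have small measure -/
lemma μc_le_of_diam_le (hβ0 : 0 < β) (hβ : β < 1/2) (n : ℕ) (E : Set ℝ)
    (hE : EMetric.diam E ≤ ENNReal.ofReal (β ^ n * (1 - 2*β))) :
    μc β E ≤ (2 ^ n)⁻¹ := by
  have hmono : μc β E ≤ μc β (closure E) := measure_mono subset_closure
  refine hmono.trans ?_
  rw [μc, Measure.map_apply (measurable_gmap hβ0 hβ) isClosed_closure.measurableSet]
  rcases Set.eq_empty_or_nonempty (gmap β ⁻¹' closure E) with h | ⟨f₀, hf₀⟩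
  · rw [h]; simp
  have hsub : gmap β ⁻¹' closure E ⊆ Cyl n (fun i => f₀ (i : ℕ)) := by
    intro f hf
    intro i
    by_contra hne'
    have hne : f ≠ f₀ := fun h => hne' (by rw [h])
    obtain ⟨m, hagree, hm, hd⟩ := gmap_dist hβ0 hβ hne
    have hmn : m < n := by
      by_contra hmn
      push_neg at hmn
      exact hne' (hagree (i : ℕ) (lt_of_lt_of_le i.isLt hmn))
    -- distance contradiction
    have hdiam : edist (gmap β f) (gmap β f₀) ≤ EMetric.diam E := by
      show edist (gmap β f) (gmap β f₀) ≤ Metric.ediam E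
      rw [← EMetric.diam_closure]
      exact EMetric.edist_le_diam_of_mem hf hf₀
    have h1 : ENNReal.ofReal |gmap β f - gmap β f₀| ≤ ENNReal.ofReal (β ^ n * (1 - 2*β)) := by
      have : edist (gmap β f) (gmap β f₀) = ENNReal.ofReal |gmap β f - gmap β f₀| := by
        rw [edist_dist, Real.dist_eq]
      rw [← this]
      exact hdiam.trans hE
    have h2 : |gmap β f - gmap β f₀| ≤ β ^ n * (1 - 2*β) :=
      (ENNReal.ofReal_le_ofReal_iff (by nlinarith [pow_pos hβ0 n])).1 h1
    have h3 : β ^ n * (1 - 2*β) < β ^ m * (1 - 2*β) := by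
      apply mul_lt_mul_of_pos_right _ (by linarith)
      exact pow_lt_pow_right_of_lt_one₀ hβ0 (by linarith) hmn
    linarith
  calc μG (gmap β ⁻¹' closure E) ≤ μG (Cyl n fun i => f₀ (i : ℕ)) :=
        measure_mono hsub
  _ = (2 ^ n)⁻¹ := μG_Cyl n _

noncomputable def Kr (β s : ℝ) : ℝ := (((β*(1-2*β)) : ℝ) ^ s)⁻¹

lemma Kr_pos (hβ0 : 0 < β) (hβ : β < 1/2) {s : ℝ} : 0 < Kr β s := by
  have h : (0:ℝ) < β*(1-2*β) := by nlinarith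
  rw [Kr]
  positivity

lemma pow_rpow_s (hβ0 : 0 < β) {s : ℝ} (hs : β ^ s = 1/2) (m : ℕ) :
    ((β ^ m : ℝ) : ℝ) ^ s = (1/2 : ℝ) ^ m := by
  rw [← Real.rpow_natCast β m, ← Real.rpow_mul hβ0.le, mul_comm,
    Real.rpow_mul hβ0.le, hs, Real.rpow_natCast]

lemma ofReal_half_pow (m : ℕ) : ENNReal.ofReal ((1/2 : ℝ) ^ m) = ((2:ℝ≥0∞) ^ m)⁻¹ := by
  rw [ENNReal.ofReal_pow (by norm_num)]
  have h12 : ENNReal.ofReal (1/2 : ℝ) = (2:ℝ≥0∞)⁻¹ := by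
    rw [one_div, ENNReal.ofReal_inv_of_pos (by norm_num)]
    norm_num
  rw [h12, ENNReal.inv_pow]

lemma μc_mass (hβ0 : 0 < β) (hβ : β < 1/2) {s : ℝ} (hs0 : 0 < s) (hs : β ^ s = 1/2)
    (E : Set ℝ) :
    μc β E ≤ ENNReal.ofReal (Kr β s) * EMetric.diam E ^ s := by
  have h2β : (0:ℝ) < 1 - 2*β := by linarith
  have hc0 : (0:ℝ) < β*(1-2*β) := by nlinarith
  set δ := EMetric.diam E with hδ
  rcases eq_or_ne δ 0 with hδ0 | hδ0
  · -- diameter zero: measure is zero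
    have hlim : Tendsto (fun n : ℕ => ((2:ℝ≥0∞) ^ n)⁻¹) atTop (𝓝 0) := by
      have hrw : (fun n : ℕ => ((2:ℝ≥0∞) ^ n)⁻¹) = fun n : ℕ => ((2:ℝ≥0∞)⁻¹) ^ n := by
        funext n; rw [ENNReal.inv_pow]
      rw [hrw]
      apply ENNReal.tendsto_pow_atTop_nhds_zero_of_lt_one
      exact ENNReal.inv_lt_one.2 ENNReal.one_lt_two
    have hle : ∀ n : ℕ, μc β E ≤ ((2:ℝ≥0∞) ^ n)⁻¹ := fun n =>
      μc_le_of_diam_le hβ0 hβ n E (by rw [← hδ, hδ0]; exact zero_le)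
    have h0 : μc β E ≤ 0 := ge_of_tendsto hlim (Eventually.of_forall hle)
    exact h0.trans zero_le
  rcases eq_or_ne δ ∞ with hδtop | hδtop
  · rw [hδtop, ENNReal.top_rpow_of_pos hs0, ENNReal.mul_top]
    · exact le_top
    · simp [ENNReal.ofReal_eq_zero, not_le, Kr_pos hβ0 hβ]
  -- now 0 < δ < ∞
  have hδr : 0 < δ.toReal := ENNReal.toReal_pos hδ0 hδtop
  set δr := δ.toReal with hδrdef
  have hδeq : δ = ENNReal.ofReal δr := (ENNReal.ofReal_toReal hδtop).symm
  have hofs : δ ^ s = ENNReal.ofReal (δr ^ s) := by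
    rw [hδeq, ← ENNReal.ofReal_rpow_of_pos hδr]
  rcases le_or_gt (1 - 2*β) δr with hcase | hcase
  · -- big diameter: use μc ≤ 1
    have h1 : μc β E ≤ 1 := by
      rw [μc]
      calc Measure.map (gmap β) μG E ≤ Measure.map (gmap β) μG univ := measure_mono (subset_univ E)
      _ = 1 := by
        rw [Measure.map_apply (measurable_gmap hβ0 hβ) MeasurableSet.univ]
        simpa using μG_univ
    refine h1.trans ?_
    rw [hofs, ← ENNReal.ofReal_mul (Kr_pos hβ0 hβ).le]
    have hreal : (1:ℝ) ≤ Kr β s * δr ^ s := by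
      have h1 : ((β*(1-2*β)) : ℝ) ^ s ≤ δr ^ s := by
        apply Real.rpow_le_rpow hc0.le _ hs0.le
        nlinarith
      have h2 : (0:ℝ) < ((β*(1-2*β)) : ℝ) ^ s := Real.rpow_pos_of_pos hc0 s
      rw [Kr]
      rw [inv_mul_eq_div, le_div_iff₀ h2, one_mul]
      exact h1
    calc (1:ℝ≥0∞) = ENNReal.ofReal 1 := by simp
    _ ≤ ENNReal.ofReal (Kr β s * δr ^ s) := ENNReal.ofReal_le_ofReal hreal
  · -- small diameter: find the right level
    have hex : ∃ n : ℕ, β ^ n * (1-2*β) < δr := by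
      have htend : Tendsto (fun n : ℕ => β ^ n * (1-2*β)) atTop (𝓝 0) := by
        simpa using (tendsto_pow_atTop_nhds_zero_of_lt_one hβ0.le (by linarith)).mul_const (1-2*β)
      rcases (htend.eventually (gt_mem_nhds hδr)).exists with ⟨n, hn⟩
      exact ⟨n, hn⟩
    set N := Nat.find hex with hNdef
    have hN : β ^ N * (1-2*β) < δr := Nat.find_spec hex
    have hN0 : N ≠ 0 := by
      intro h
      rw [h] at hN
      simp at hN
      linarith
    obtain ⟨m, hm⟩ : ∃ m, N = m + 1 := ⟨N - 1, by omega⟩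
    have hmin : ¬ (β ^ m * (1-2*β) < δr) := Nat.find_min hex (by omega)
    push_neg at hmin
    have hkey : μc β E ≤ ((2:ℝ≥0∞) ^ m)⁻¹ :=
      μc_le_of_diam_le hβ0 hβ m E (by rw [← hδ, hδeq]; exact ENNReal.ofReal_le_ofReal hmin)
    refine hkey.trans ?_
    rw [← ofReal_half_pow, ← pow_rpow_s hβ0 hs, hofs, ← ENNReal.ofReal_mul (Kr_pos hβ0 hβ).le]
    apply ENNReal.ofReal_le_ofReal
    -- real inequality: (β^m)^s ≤ Kr * δr^s
    have hβm : (β ^ m : ℝ) ≤ δr / (β*(1-2*β)) := by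
      rw [le_div_iff₀ hc0]
      calc β ^ m * (β*(1-2*β)) = β ^ (m+1) * (1-2*β) := by ring
      _ ≤ δr := by rw [← hm]; exact hN.le
    calc ((β ^ m : ℝ)) ^ s ≤ (δr / (β*(1-2*β))) ^ s :=
          Real.rpow_le_rpow (pow_nonneg hβ0.le m) hβm hs0.le
    _ = δr ^ s / ((β*(1-2*β)) : ℝ) ^ s := Real.div_rpow (by positivity) hc0.le s
    _ = Kr β s * δr ^ s := by rw [Kr]; ring

lemma ofReal_Kr_ne_zero (hβ0 : 0 < β) (hβ : β < 1/2) {s : ℝ} :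
    ENNReal.ofReal (Kr β s) ≠ 0 := by
  simp only [ne_eq, ENNReal.ofReal_eq_zero, not_le]
  exact Kr_pos hβ0 hβ

lemma hausdorff_lower (hβ0 : 0 < β) (hβ : β < 1/2) {s : ℝ} (hs0 : 0 < s) (hs : β ^ s = 1/2) :
    (ENNReal.ofReal (Kr β s))⁻¹ ≤ μH[s] (cantorSet β) := by
  have hK0 := ofReal_Kr_ne_zero hβ0 hβ (s := s)
  have hKt : ENNReal.ofReal (Kr β s) ≠ ∞ := ENNReal.ofReal_ne_top
  have hle : (ENNReal.ofReal (Kr β s))⁻¹ • μc β ≤ μH[s] := by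
    apply MeasureTheory.Measure.le_hausdorffMeasure s _ 1 one_pos
    intro E _
    rw [Measure.smul_apply, smul_eq_mul]
    calc (ENNReal.ofReal (Kr β s))⁻¹ * μc β E
        ≤ (ENNReal.ofReal (Kr β s))⁻¹ * (ENNReal.ofReal (Kr β s) * EMetric.diam E ^ s) :=
          mul_le_mul_right (μc_mass hβ0 hβ hs0 hs E) _
    _ = EMetric.diam E ^ s := by rw [← mul_assoc, ENNReal.inv_mul_cancel hK0 hKt, one_mul]
  calc (ENNReal.ofReal (Kr β s))⁻¹ = (ENNReal.ofReal (Kr β s))⁻¹ * μc β (cantorSet β) := by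
        rw [μc_cantor hβ0 hβ, mul_one]
  _ = ((ENNReal.ofReal (Kr β s))⁻¹ • μc β) (cantorSet β) := by
        rw [Measure.smul_apply, smul_eq_mul]
  _ ≤ μH[s] (cantorSet β) := hle _

/-- extension of a finite word to an infinite one -/
def extW (n : ℕ) (v : Fin n → ZMod 2) : G := fun i => if h : i < n then v ⟨i, h⟩ else 0

lemma cantor_cover (hβ0 : 0 < β) (hβ : β < 1/2) (n : ℕ) :
    cantorSet β ⊆ ⋃ v : Fin n → ZMod 2,
      Icc (preSum β n (extW n v)) (preSum β n (extW n v) + β ^ n) := by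
  rintro x ⟨f, rfl⟩
  refine mem_iUnion.2 ⟨fun i => f (i : ℕ), ?_⟩
  have hpre : preSum β n (extW n (fun i => f (i : ℕ))) = preSum β n f :=
    preSum_congr n fun i hi => by simp [extW, dif_pos hi]
  rw [hpre]
  exact gmap_mem hβ0 hβ n f

lemma diam_cover (n : ℕ) (a : ℝ) (hβ0 : 0 < β) :
    EMetric.diam (Icc a (a + β ^ n)) = ENNReal.ofReal (β ^ n) := by
  show Metric.ediam _ = _
  rw [Real.ediam_Icc]
  ring_nf

lemma hausdorff_upper (hβ0 : 0 < β) (hβ : β < 1/2) {s : ℝ} (hs0 : 0 < s) (hs : β ^ s = 1/2) :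
    μH[s] (cantorSet β) ≤ 1 := by
  have hr : Tendsto (fun n : ℕ => ENNReal.ofReal (β ^ n)) atTop (𝓝 0) := by
    simpa using ENNReal.tendsto_ofReal
      (tendsto_pow_atTop_nhds_zero_of_lt_one hβ0.le (by linarith))
  have h := MeasureTheory.Measure.hausdorffMeasure_le_liminf_sum
    (ι := fun n : ℕ => Fin n → ZMod 2) s (cantorSet β)
    (fun n => ENNReal.ofReal (β ^ n)) hr
    (fun n v => Icc (preSum β n (extW n v)) (preSum β n (extW n v) + β ^ n))
    (Eventually.of_forall fun n => fun v => (diam_cover n _ hβ0).le)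
    (Eventually.of_forall fun n => cantor_cover hβ0 hβ n)
  refine h.trans ?_
  have hsum : ∀ n : ℕ, (∑ v : Fin n → ZMod 2,
      EMetric.diam (Icc (preSum β n (extW n v)) (preSum β n (extW n v) + β ^ n)) ^ s) = 1 := by
    intro n
    have hd : ∀ v : Fin n → ZMod 2,
        EMetric.diam (Icc (preSum β n (extW n v)) (preSum β n (extW n v) + β ^ n)) ^ s
        = ((2:ℝ≥0∞) ^ n)⁻¹ := by
      intro v
      rw [diam_cover n _ hβ0, ENNReal.ofReal_rpow_of_pos (pow_pos hβ0 n),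
        pow_rpow_s hβ0 hs, ofReal_half_pow]
    rw [Finset.sum_congr rfl fun v _ => hd v, Finset.sum_const, Finset.card_univ]
    have hcard : (Fintype.card (Fin n → ZMod 2)) = 2 ^ n := by simp
    rw [hcard, nsmul_eq_mul]
    push_cast
    rw [ENNReal.mul_inv_cancel (by positivity) (ENNReal.pow_ne_top (by norm_num))]
  have hsum' : ∀ n : ℕ, (∑ v : Fin n → ZMod 2,
      Metric.ediam (Icc (preSum β n (extW n v)) (preSum β n (extW n v) + β ^ n)) ^ s) = 1 := hsum
  simp only [hsum']
  exact (liminf_const 1).le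

lemma dimH_cantorSet (hβ0 : 0 < β) (hβ : β < 1/2) {s : ℝ} (hs0 : 0 < s) (hs : β ^ s = 1/2) :
    dimH (cantorSet β) = ENNReal.ofReal s := by
  have hd : ((s.toNNReal : ℝ≥0) : ℝ) = s := Real.coe_toNNReal s hs0.le
  have hcoe : ((s.toNNReal : ℝ≥0) : ℝ≥0∞) = ENNReal.ofReal s := rfl
  apply le_antisymm
  · rw [← hcoe]
    apply dimH_le_of_hausdorffMeasure_ne_top
    rw [hd]
    exact ne_top_of_le_ne_top ENNReal.one_ne_top (hausdorff_upper hβ0 hβ hs0 hs)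
  · rw [← hcoe]
    apply le_dimH_of_hausdorffMeasure_ne_zero
    rw [hd]
    refine ne_of_gt (lt_of_lt_of_le ?_ (hausdorff_lower hβ0 hβ hs0 hs))
    exact ENNReal.inv_pos.2 ENNReal.ofReal_ne_top

lemma volume_cantorSet (hβ0 : 0 < β) (hβ : β < 1/2) : volume (cantorSet β) = 0 := by
  have hn : ∀ n : ℕ, volume (cantorSet β) ≤ ENNReal.ofReal ((2*β) ^ n) := by
    intro n
    calc volume (cantorSet β)
        ≤ volume (⋃ v : Fin n → ZMod 2,
            Icc (preSum β n (extW n v)) (preSum β n (extW n v) + β ^ n)) :=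
          measure_mono (cantor_cover hβ0 hβ n)
    _ ≤ ∑ v : Fin n → ZMod 2,
          volume (Icc (preSum β n (extW n v)) (preSum β n (extW n v) + β ^ n)) :=
          measure_iUnion_fintype_le _ _
    _ = ENNReal.ofReal ((2*β) ^ n) := by
        have hv : ∀ v : Fin n → ZMod 2,
            volume (Icc (preSum β n (extW n v)) (preSum β n (extW n v) + β ^ n))
            = ENNReal.ofReal (β ^ n) := by
          intro v; rw [Real.volume_Icc]; ring_nf
        rw [Finset.sum_congr rfl fun v _ => hv v, Finset.sum_const, Finset.card_univ]
        have hcard : (Fintype.card (Fin n → ZMod 2)) = 2 ^ n := by simp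
        rw [hcard, nsmul_eq_mul]
        rw [mul_pow, ENNReal.ofReal_mul (by positivity), ENNReal.ofReal_pow hβ0.le]
        congr 1
        rw [ENNReal.ofReal_pow (by norm_num : (0:ℝ) ≤ 2)]
        norm_num
  have hlim : Tendsto (fun n : ℕ => ENNReal.ofReal ((2*β) ^ n)) atTop (𝓝 0) := by
    simpa using ENNReal.tendsto_ofReal
      (tendsto_pow_atTop_nhds_zero_of_lt_one (by linarith) (by linarith))
  have := ge_of_tendsto hlim (Eventually.of_forall hn)
  exact le_antisymm this zero_le

/-- Packaged Cantor set existence -/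
lemma exists_cantor (s : ℝ) (hs0 : 0 < s) (hs1 : s < 1) :
    ∃ C : Set ℝ, dimH C = ENNReal.ofReal s ∧ volume C = 0 := by
  set β : ℝ := (2:ℝ) ^ (-s⁻¹) with hβdef
  have hβ0 : 0 < β := Real.rpow_pos_of_pos two_pos _
  have hβ : β < 1/2 := by
    have h1 : ((2:ℝ) ^ (-s⁻¹) : ℝ) < (2:ℝ) ^ (-1 : ℝ) := by
      apply Real.rpow_lt_rpow_left_iff (x := 2) (by norm_num) |>.2
      have : 1 < s⁻¹ := (one_lt_inv₀ hs0).2 hs1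
      linarith
    have h2 : ((2:ℝ) ^ (-1 : ℝ) : ℝ) = 1/2 := by
      rw [Real.rpow_neg_one]; norm_num
    rw [hβdef, ← h2]; exact h1
  have hs : β ^ s = 1/2 := by
    rw [hβdef, ← Real.rpow_mul (by norm_num : (0:ℝ) ≤ 2), neg_mul,
      inv_mul_cancel₀ hs0.ne', Real.rpow_neg_one]
    norm_num
  exact ⟨cantorSet β, dimH_cantorSet hβ0 hβ hs0 hs, volume_cantorSet hβ0 hβ⟩

lemma frontier_preimage_subset {X Y : Type*} [TopologicalSpace X] [TopologicalSpace Y]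
    {f : X → Y} (hf : Continuous f) (s : Set Y) :
    frontier (f ⁻¹' s) ⊆ f ⁻¹' (frontier s) := by
  have h1 : closure (f ⁻¹' s) ⊆ f ⁻¹' closure s := hf.closure_preimage_subset s
  have h2 : f ⁻¹' interior s ⊆ interior (f ⁻¹' s) := preimage_interior_subset_interior_preimage hf
  intro x hx
  rw [frontier, mem_diff] at hx
  constructor
  · exact h1 hx.1
  · intro hmem
    exact hx.2 (h2 hmem)

/-- Any subset of ℝ with measure zero has small inductive dimension 0. -/
lemma indDim_eq_zero_of_volume_zero {F : Set ℝ} (h : volume F = 0) : indDim ↥F = 0 := by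
  -- complement is "dense in intervals"
  have hdense : ∀ c d : ℝ, c < d → ∃ a, a ∈ Ioo c d ∧ a ∉ F := by
    intro c d hcd
    by_contra hcon
    push_neg at hcon
    have hsub : Ioo c d ⊆ F := fun a ha => hcon a ha
    have := measure_mono hsub (μ := volume)
    rw [h, Real.volume_Ioo] at this
    simp only [nonpos_iff_eq_zero, ENNReal.ofReal_eq_zero] at this
    linarith
  have hind : IndLE 1 ↥F inferInstance := by
    refine ⟨{U | ∃ a b : ℝ, a ∉ F ∧ b ∉ F ∧ U = (Subtype.val : ↥F → ℝ) ⁻¹' Ioo a b}, ?_, ?_⟩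
    · apply TopologicalSpace.isTopologicalBasis_of_isOpen_of_nhds
      · rintro U ⟨a, b, _, _, rfl⟩
        exact isOpen_Ioo.preimage continuous_subtype_val
      · intro x U hxU hU
        obtain ⟨V, hV, rfl⟩ := isOpen_induced_iff.1 hU
        have hxV : (x : ℝ) ∈ V := hxU
        obtain ⟨ε, hε, hball⟩ := Metric.isOpen_iff.1 hV _ hxV
        obtain ⟨a, ha, haF⟩ := hdense ((x:ℝ) - ε) (x:ℝ) (by linarith)
        obtain ⟨b, hb, hbF⟩ := hdense (x:ℝ) ((x:ℝ) + ε) (by linarith)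
        refine ⟨(Subtype.val : ↥F → ℝ) ⁻¹' Ioo a b, ⟨a, b, haF, hbF, rfl⟩, ⟨ha.2, hb.1⟩, ?_⟩
        intro y hy
        show (y : ℝ) ∈ V
        apply hball
        rw [Metric.mem_ball, Real.dist_eq, abs_lt]
        rcases hy with ⟨hy1, hy2⟩
        rcases ha with ⟨ha1, _⟩
        rcases hb with ⟨_, hb2⟩
        constructor <;> [linarith; linarith]
    · rintro U ⟨a, b, haF, hbF, rfl⟩
      show IsEmpty _
      have hsub : frontier ((Subtype.val : ↥F → ℝ) ⁻¹' Ioo a b) ⊆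
          (Subtype.val : ↥F → ℝ) ⁻¹' (frontier (Ioo a b)) :=
        frontier_preimage_subset continuous_subtype_val _
      have hempty : frontier ((Subtype.val : ↥F → ℝ) ⁻¹' Ioo a b) = ∅ := by
        rcases le_or_gt b a with hba | hab
        · rw [Ioo_eq_empty (by exact fun hlt => absurd hba (not_le.2 hlt))] at *
          have : frontier ((Subtype.val : ↥F → ℝ) ⁻¹' (∅ : Set ℝ)) = ∅ := by
            rw [preimage_empty, frontier_empty]
          exact this
        · apply eq_empty_of_subset_empty
          refine hsub.trans ?_
          rw [frontier_Ioo hab]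
          rintro y hy
          rcases hy with hy | hy
          · exact absurd (hy ▸ y.2 : a ∈ F) haF
          · exact absurd (hy ▸ y.2 : b ∈ F) hbF
      rw [hempty]
      exact Set.isEmpty_coe_sort.2 rfl
  have h0 : (0 : ℝ≥0∞) ∈ (fun k : ℕ => (k : ℝ≥0∞)) '' {k : ℕ | IndLE (k + 1) ↥F inferInstance} :=
    ⟨0, hind, by simp⟩
  exact le_antisymm (sInf_le h0) zero_le


/-- union of Cantor sets of dimension `(n+1)/(n+2)`: a dimension-1 null set -/
lemma exists_union : ∃ F : Set ℝ, dimH F = 1 ∧ volume F = 0 := by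
  set sq : ℕ → ℝ := fun n => ((n:ℝ)+1)/((n:ℝ)+2) with hsq
  have hs0 : ∀ n : ℕ, 0 < sq n := fun n => by positivity
  have hs1 : ∀ n : ℕ, sq n < 1 := fun n => by
    rw [hsq, div_lt_one (by positivity)]; linarith
  choose C hC hV using fun n => exists_cantor (sq n) (hs0 n) (hs1 n)
  refine ⟨⋃ n, C n, ?_, measure_iUnion_null fun n => hV n⟩
  rw [dimH_iUnion]
  apply le_antisymm
  · refine iSup_le fun n => ?_
    rw [hC n]
    exact ENNReal.ofReal_le_one.2 (hs1 n).le
  · have hreal : Tendsto sq atTop (𝓝 1) := by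
      have heq : sq = fun n : ℕ => 1 - 1/((n:ℝ)+2) := by
        funext n
        rw [hsq]
        have h2 : ((n:ℝ)+2) ≠ 0 := by positivity
        field_simp
        ring
      rw [heq]
      have h2 : Tendsto (fun n : ℕ => ((n:ℝ)+2)) atTop atTop :=
        tendsto_atTop_add_const_right _ 2 tendsto_natCast_atTop_atTop
      have h3 : Tendsto (fun n : ℕ => 1/((n:ℝ)+2)) atTop (𝓝 0) := by
        simpa [one_div, Pi.inv_def] using h2.inv_tendsto_atTop
      simpa using tendsto_const_nhds.sub h3
    have htend : Tendsto (fun n : ℕ => ENNReal.ofReal (sq n)) atTop (𝓝 1) := by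
      simpa using ENNReal.tendsto_ofReal hreal
    refine le_of_tendsto htend (Eventually.of_forall fun n => ?_)
    rw [← hC n]
    exact le_iSup (fun n => dimH (C n)) n

end ThinFractal

/-- For every `0 < r ≤ 1` there is `F ⊆ ℝ` with Hausdorff dimension `r`,
Lebesgue measure `0`, and small inductive (topological) dimension `0`; in particular `F`
is a fractal in Mandelbrot's sense. -/
theorem exists_thin_fractal (r : ℝ) (hr : r ∈ Set.Ioc (0 : ℝ) 1) :
    ∃ F : Set ℝ, dimH F = ENNReal.ofReal r ∧ volume F = 0 ∧
      indDim ↥F = 0 ∧ indDim ↥F < dimH F := by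
  obtain ⟨hr0, hr1⟩ := hr
  have main : ∃ F : Set ℝ, dimH F = ENNReal.ofReal r ∧ volume F = 0 := by
    rcases lt_or_eq_of_le hr1 with hlt | heq
    · exact ThinFractal.exists_cantor r hr0 hlt
    · obtain ⟨F, hdim, hvol⟩ := ThinFractal.exists_union
      exact ⟨F, by rw [hdim, heq, ENNReal.ofReal_one], hvol⟩
  obtain ⟨F, hdim, hvol⟩ := main
  have hzero := ThinFractal.indDim_eq_zero_of_volume_zero hvol
  refine ⟨F, hdim, hvol, hzero, ?_⟩
  rw [hzero, hdim]
  exact ENNReal.ofReal_pos.2 hr0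
end

section
/- For every real r with 0 < r ≤ 1 and l = 0, there exist continuum-many (cardinality 2^ℵ₀) pairwise distinct subsets of ℝ, each with Hausdorff dimension r, Lebesgue measure 0, and topological dimension 0. -/
open scoped ENNReal
open MeasureTheory Set

universe u

/-- Small inductive dimension ≤ 0. -/
def IndDimLEZero (X : Type u) [t : TopologicalSpace X] : Prop := IndLE 1 X t

open Filter Topology
open scoped NNReal

noncomputable def cg (l : ℝ) (x : ℕ → Bool) : ℝ := ∑' n, if x n then (1 - l) * l ^ n else 0

section cgbasic

lemma cg_term_nonneg {l : ℝ} (hl0 : 0 < l) (hl1 : l < 1) (x : ℕ → Bool) (n : ℕ) :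
    0 ≤ if x n then (1 - l) * l ^ n else 0 := by
  split
  · exact mul_nonneg (by linarith) (pow_nonneg hl0.le n)
  · exact le_refl 0

lemma cg_term_le {l : ℝ} (hl0 : 0 < l) (hl1 : l < 1) (x : ℕ → Bool) (n : ℕ) :
    (if x n then (1 - l) * l ^ n else 0) ≤ (1 - l) * l ^ n := by
  split
  · exact le_rfl
  · exact mul_nonneg (by linarith) (pow_nonneg hl0.le n)

lemma cg_summable {l : ℝ} (hl0 : 0 < l) (hl1 : l < 1) (x : ℕ → Bool) :
    Summable (fun n => if x n then (1 - l) * l ^ n else 0) :=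
  Summable.of_nonneg_of_le (cg_term_nonneg hl0 hl1 x) (cg_term_le hl0 hl1 x)
    ((summable_geometric_of_lt_one hl0.le hl1).mul_left _)

lemma cg_nonneg {l : ℝ} (hl0 : 0 < l) (hl1 : l < 1) (x : ℕ → Bool) : 0 ≤ cg l x :=
  tsum_nonneg (cg_term_nonneg hl0 hl1 x)

lemma tsum_geom_mul {l : ℝ} (hl0 : 0 < l) (hl1 : l < 1) : ∑' n : ℕ, (1 - l) * l ^ n = 1 := by
  rw [tsum_mul_left, tsum_geometric_of_lt_one hl0.le hl1]
  have : (1:ℝ) - l ≠ 0 := by linarith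
  field_simp

lemma cg_le_one {l : ℝ} (hl0 : 0 < l) (hl1 : l < 1) (x : ℕ → Bool) : cg l x ≤ 1 := by
  have h := Summable.tsum_le_tsum (cg_term_le hl0 hl1 x) (cg_summable hl0 hl1 x)
    ((summable_geometric_of_lt_one hl0.le hl1).mul_left (1-l))
  rwa [tsum_geom_mul hl0 hl1] at h

lemma cg_tail_le {l : ℝ} (hl0 : 0 < l) (hl1 : l < 1) (x : ℕ → Bool) (k : ℕ) :
    ∑' m : ℕ, (if x (m + k) then (1 - l) * l ^ (m + k) else 0) ≤ l ^ k := by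
  have h1 : ∑' m : ℕ, (1 - l) * l ^ (m + k) = l ^ k := by
    have h2 : ∀ m : ℕ, (1 - l) * l ^ (m + k) = l ^ k * ((1 - l) * l ^ m) := by
      intro m; rw [pow_add]; ring
    simp_rw [h2]
    rw [tsum_mul_left, tsum_geom_mul hl0 hl1, mul_one]
  calc ∑' m : ℕ, (if x (m + k) then (1 - l) * l ^ (m + k) else 0)
      ≤ ∑' m : ℕ, (1 - l) * l ^ (m + k) := by
        refine Summable.tsum_le_tsum (fun m => cg_term_le hl0 hl1 x (m+k)) ?_ ?_
        · exact ((cg_summable hl0 hl1 x).comp_injective (add_left_injective k))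
        · exact ((summable_geometric_of_lt_one hl0.le hl1).mul_left (1-l)).comp_injective
            (add_left_injective k)
    _ = l ^ k := h1

lemma cg_tail_nonneg {l : ℝ} (hl0 : 0 < l) (hl1 : l < 1) (x : ℕ → Bool) (k : ℕ) :
    0 ≤ ∑' m : ℕ, (if x (m + k) then (1 - l) * l ^ (m + k) else 0) :=
  tsum_nonneg (fun m => cg_term_nonneg hl0 hl1 x (m+k))

lemma cg_split {l : ℝ} (hl0 : 0 < l) (hl1 : l < 1) (x : ℕ → Bool) (k : ℕ) :
    cg l x = (∑ i ∈ Finset.range k, if x i then (1 - l) * l ^ i else 0)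
      + ∑' m : ℕ, (if x (m + k) then (1 - l) * l ^ (m + k) else 0) :=
  (Summable.sum_add_tsum_nat_add (k := k) (cg_summable hl0 hl1 x)).symm

end cgbasic

section cgdist

lemma cg_dist_le {l : ℝ} (hl0 : 0 < l) (hl1 : l < 1) {x y : ℕ → Bool} {k : ℕ}
    (h : ∀ i < k, x i = y i) : |cg l x - cg l y| ≤ l ^ k := by
  rw [cg_split hl0 hl1 x k, cg_split hl0 hl1 y k]
  have hsum : (∑ i ∈ Finset.range k, if x i then (1 - l) * l ^ i else 0)
      = ∑ i ∈ Finset.range k, if y i then (1 - l) * l ^ i else 0 := by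
    refine Finset.sum_congr rfl fun i hi => ?_
    rw [h i (Finset.mem_range.1 hi)]
  rw [hsum]
  have b1 := cg_tail_le hl0 hl1 x k
  have b2 := cg_tail_le hl0 hl1 y k
  have b3 := cg_tail_nonneg hl0 hl1 x k
  have b4 := cg_tail_nonneg hl0 hl1 y k
  rw [abs_le]
  constructor <;> [skip; skip] <;> linarith

lemma cg_dist_ge {l : ℝ} (hl0 : 0 < l) (hl2 : l < 1/2) {x y : ℕ → Bool} {k : ℕ}
    (hk : x k ≠ y k) (h : ∀ i < k, x i = y i) :
    (1 - 2*l) * l ^ k ≤ |cg l x - cg l y| := by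
  have hl1 : l < 1 := by linarith
  -- key: if x k = true and y k = false then cg l x - cg l y ≥ (1-2l) l^k
  have key : ∀ x y : ℕ → Bool, x k = true → y k = false → (∀ i < k, x i = y i) →
      (1 - 2*l) * l ^ k ≤ cg l x - cg l y := by
    intro x y hxk hyk h
    rw [cg_split hl0 hl1 x (k+1), cg_split hl0 hl1 y (k+1)]
    have hsum : (∑ i ∈ Finset.range (k+1), if x i then (1 - l) * l ^ i else 0)
        = (∑ i ∈ Finset.range (k+1), if y i then (1 - l) * l ^ i else 0) + (1 - l) * l ^ k := by
      rw [Finset.sum_range_succ, Finset.sum_range_succ, hxk, hyk]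
      have hsum2 : (∑ i ∈ Finset.range k, if x i then (1 - l) * l ^ i else 0)
          = ∑ i ∈ Finset.range k, if y i then (1 - l) * l ^ i else 0 := by
        refine Finset.sum_congr rfl fun i hi => ?_
        rw [h i (Finset.mem_range.1 hi)]
      rw [hsum2]
      simp
    rw [hsum]
    have b1 := cg_tail_le hl0 hl1 y (k+1)
    have b3 := cg_tail_nonneg hl0 hl1 x (k+1)
    have hp : l ^ (k+1) = l * l ^ k := by ring
    nlinarith [pow_nonneg hl0.le k]
  rcases Bool.eq_false_or_eq_true (x k) with hx | hx
  · have hy : y k = false := by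
      cases hyk : y k
      · rfl
      · exact absurd (hx.trans hyk.symm) hk
    exact (key x y hx hy h).trans (le_abs_self _)
  · have hy : y k = true := by
      cases hyk : y k
      · exact absurd (hx.trans hyk.symm) hk
      · rfl
    have hkey := key y x hy hx (fun i hi => (h i hi).symm)
    rw [abs_sub_comm]
    exact hkey.trans (le_abs_self _)

lemma cg_injective {l : ℝ} (hl0 : 0 < l) (hl2 : l < 1/2) : Function.Injective (cg l) := by
  intro x y hxy
  by_contra hne
  have hex : ∃ n, x n ≠ y n := by
    by_contra hc
    push_neg at hc
    exact hne (funext hc)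
  classical
  let k := Nat.find hex
  have hk : x k ≠ y k := Nat.find_spec hex
  have hlt : ∀ i < k, x i = y i := fun i hi => by
    by_contra hc
    exact absurd (Nat.find_le hc) (not_le.2 hi)
  have := cg_dist_ge hl0 hl2 hk hlt
  rw [hxy, sub_self, abs_zero] at this
  nlinarith [pow_pos hl0 k]

end cgdist


section surj

lemma cg_half_term (x : ℕ → Bool) (n : ℕ) :
    (if x n then (1 - (1/2:ℝ)) * (1/2) ^ n else 0) = (if x n then ((1/2:ℝ)) ^ (n+1) else 0) := by
  split
  · rw [pow_succ]; ring
  · rfl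

lemma cg_half_surjOn (t : ℝ) (ht : t ∈ Icc (0:ℝ) 1) : ∃ x : ℕ → Bool, cg (1/2) x = t := by
  obtain ⟨ht0, ht1⟩ := ht
  rcases eq_or_lt_of_le ht1 with rfl | ht1
  · refine ⟨fun _ => true, ?_⟩
    unfold cg
    simp only [if_true]
    exact tsum_geom_mul (by norm_num) (by norm_num)
  classical
  set dig : ℕ → ℤ := fun n => ⌊t * 2 ^ (n+1)⌋ - 2 * ⌊t * 2 ^ n⌋ with hdig
  have dig01 : ∀ n, dig n = 0 ∨ dig n = 1 := by
    intro n
    have h1 : (2:ℤ) * ⌊t * 2 ^ n⌋ ≤ ⌊t * 2 ^ (n+1)⌋ := by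
      apply Int.le_floor.2
      push_cast
      have h := Int.floor_le (t * 2 ^ n)
      have he : t * 2 ^ (n+1) = 2 * (t * 2 ^ n) := by ring
      rw [he]; linarith
    have h2 : ⌊t * 2 ^ (n+1)⌋ < 2 * ⌊t * 2 ^ n⌋ + 2 := by
      apply Int.floor_lt.2
      push_cast
      have h := Int.lt_floor_add_one (t * 2 ^ n)
      have he : t * 2 ^ (n+1) = 2 * (t * 2 ^ n) := by ring
      rw [he]; linarith
    simp only [hdig]
    omega
  refine ⟨fun n => decide (dig n = 1), ?_⟩
  set x : ℕ → Bool := fun n => decide (dig n = 1) with hx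
  have key : ∀ N, (∑ n ∈ Finset.range N, if x n then ((1/2:ℝ)) ^ (n+1) else 0)
      = (⌊t * 2 ^ N⌋ : ℝ) / 2 ^ N := by
    intro N
    induction N with
    | zero =>
      simp only [Finset.range_zero, Finset.sum_empty, pow_zero, mul_one, div_one]
      have : ⌊t⌋ = 0 := Int.floor_eq_zero_iff.2 ⟨ht0, ht1⟩
      rw [this]; simp
    | succ N ih =>
      rw [Finset.sum_range_succ, ih]
      have hterm : (if x N then ((1/2:ℝ)) ^ (N+1) else 0) = (dig N : ℝ) / 2 ^ (N+1) := by
        rcases dig01 N with h | h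
        · simp [hx, h]
        · simp only [hx, h, decide_eq_true_eq, if_pos]
          push_cast
          rw [div_pow]
          norm_num
      rw [hterm]
      have hrec : (⌊t * 2 ^ (N+1)⌋ : ℤ) = 2 * ⌊t * 2 ^ N⌋ + dig N := by
        simp only [hdig]; ring
      rw [hrec]
      push_cast
      field_simp
      ring
  have hsum := (cg_summable (l := 1/2) (by norm_num) (by norm_num) x).hasSum
  have htend : Tendsto (fun N => ∑ n ∈ Finset.range N,
      if x n then (1 - (1/2:ℝ)) * (1/2) ^ n else 0) atTop (𝓝 (cg (1/2) x)) :=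
    hsum.tendsto_sum_nat
  have heq : (fun N => ∑ n ∈ Finset.range N, if x n then (1 - (1/2:ℝ)) * (1/2) ^ n else 0)
      = fun N => ∑ n ∈ Finset.range N, if x n then ((1/2:ℝ)) ^ (n+1) else 0 := by
    funext N
    exact Finset.sum_congr rfl fun n _ => cg_half_term x n
  rw [heq] at htend
  have htend2 : Tendsto (fun N => ∑ n ∈ Finset.range N,
      if x n then ((1/2:ℝ)) ^ (n+1) else 0) atTop (𝓝 t) := by
    simp_rw [key]
    apply tendsto_of_tendsto_of_tendsto_of_le_of_le
      (g := fun N : ℕ => t - (1/2:ℝ) ^ N) (h := fun _ : ℕ => t)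
    · have h2 : Tendsto (fun N : ℕ => ((1:ℝ)/2) ^ N) atTop (𝓝 0) :=
        tendsto_pow_atTop_nhds_zero_of_lt_one (by norm_num) (by norm_num)
      have := h2.const_sub t
      simpa using this
    · exact tendsto_const_nhds
    · intro N
      have h := Int.sub_one_lt_floor (t * 2 ^ N)
      have hpow : (0:ℝ) < 2 ^ N := by positivity
      show t - (1/2:ℝ) ^ N ≤ (⌊t * 2 ^ N⌋ : ℝ) / 2 ^ N
      rw [le_div_iff₀ hpow]
      have he : (t - (1/2:ℝ) ^ N) * 2 ^ N = t * 2 ^ N - 1 := by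
        rw [div_pow, one_pow, sub_mul, one_div, inv_mul_cancel₀ hpow.ne']
      rw [he]
      linarith
    · intro N
      have h := Int.floor_le (t * 2 ^ N)
      have hpow : (0:ℝ) < 2 ^ N := by positivity
      show (⌊t * 2 ^ N⌋ : ℝ) / 2 ^ N ≤ t
      rw [div_le_iff₀ hpow]
      linarith
  exact tendsto_nhds_unique htend htend2

end surj


section dim

noncomputable def clam (d : ℝ) : ℝ := (2:ℝ) ^ (-(1/d))

noncomputable def myCantor (d : ℝ) : Set ℝ := Set.range (cg (clam d))

variable {d : ℝ}

lemma clam_pos (hd0 : 0 < d) : 0 < clam d := Real.rpow_pos_of_pos (by norm_num) _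

lemma clam_lt_half (hd0 : 0 < d) (hd1 : d < 1) : clam d < 1/2 := by
  have h : ((2:ℝ) ^ (-(1/d))) < (2:ℝ) ^ (-(1:ℝ)) := by
    apply Real.rpow_lt_rpow_left_iff (x := 2) (by norm_num) |>.2
    have : 1 < 1/d := (one_lt_one_div hd0 hd1)
    linarith
  have h2 : ((2:ℝ) ^ (-(1:ℝ))) = 1/2 := by
    rw [Real.rpow_neg_one]
    norm_num
  rw [clam, ← h2]
  exact h

lemma clam_lt_one (hd0 : 0 < d) (hd1 : d < 1) : clam d < 1 := by
  have := clam_lt_half hd0 hd1; linarith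

lemma clam_pow_rpow (hd0 : 0 < d) (n : ℕ) : (clam d ^ n) ^ d = ((1:ℝ)/2) ^ n := by
  have h2 : (0:ℝ) ≤ 2 := by norm_num
  rw [clam, ← Real.rpow_natCast ((2:ℝ) ^ (-(1/d))) n, ← Real.rpow_mul h2, ← Real.rpow_mul h2]
  have he : -(1/d) * (n:ℝ) * d = -(n:ℝ) := by
    field_simp
  rw [he, Real.rpow_neg h2, Real.rpow_natCast, one_div, inv_pow]

end dim

section upper

variable {d : ℝ}

lemma hausdorff_myCantor_le_one (hd0 : 0 < d) (hd1 : d < 1) : μH[d] (myCantor d) ≤ 1 := by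
  have hl0 : 0 < clam d := clam_pos hd0
  have hl1 : clam d < 1 := clam_lt_one hd0 hd1
  have key := Measure.hausdorffMeasure_le_liminf_sum (X := ℝ) d (myCantor d)
      (l := atTop) (fun n => ENNReal.ofReal (clam d ^ n))
      (by
        have h := ENNReal.tendsto_ofReal
          (tendsto_pow_atTop_nhds_zero_of_lt_one hl0.le hl1)
        simpa using h)
      (fun n (v : Fin n → Bool) => cg (clam d) '' {x | ∀ i : Fin n, x i = v i})
      (by
        filter_upwards with n
        intro v
        apply EMetric.diam_le
        rintro p ⟨x, hx, rfl⟩ q ⟨y, hy, rfl⟩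
        rw [edist_dist, Real.dist_eq]
        apply ENNReal.ofReal_le_ofReal
        exact cg_dist_le hl0 hl1 (fun i hi => (hx ⟨i, hi⟩).trans (hy ⟨i, hi⟩).symm))
      (by
        filter_upwards with n
        rintro p ⟨x, rfl⟩
        exact mem_iUnion.2 ⟨fun i => x i, ⟨x, fun i => rfl, rfl⟩⟩)
  refine key.trans ?_
  have hb : ∀ n : ℕ, (∑ v : Fin n → Bool,
      EMetric.diam (cg (clam d) '' {x | ∀ i : Fin n, x i = v i}) ^ d) ≤ 1 := by
    intro n
    have hdiam : ∀ v : Fin n → Bool,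
        EMetric.diam (cg (clam d) '' {x | ∀ i : Fin n, x i = v i}) ^ d
          ≤ ENNReal.ofReal ((1/2 : ℝ) ^ n) := by
      intro v
      have h1 : EMetric.diam (cg (clam d) '' {x | ∀ i : Fin n, x i = v i})
          ≤ ENNReal.ofReal (clam d ^ n) := by
        apply EMetric.diam_le
        rintro p ⟨x, hx, rfl⟩ q ⟨y, hy, rfl⟩
        rw [edist_dist, Real.dist_eq]
        apply ENNReal.ofReal_le_ofReal
        exact cg_dist_le hl0 hl1 (fun i hi => (hx ⟨i, hi⟩).trans (hy ⟨i, hi⟩).symm)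
      calc EMetric.diam (cg (clam d) '' {x | ∀ i : Fin n, x i = v i}) ^ d
          ≤ ENNReal.ofReal (clam d ^ n) ^ d := ENNReal.rpow_le_rpow h1 hd0.le
        _ = ENNReal.ofReal ((clam d ^ n) ^ d) :=
            ENNReal.ofReal_rpow_of_nonneg (pow_nonneg hl0.le n) hd0.le
        _ = ENNReal.ofReal ((1/2 : ℝ) ^ n) := by rw [clam_pow_rpow hd0]
    calc (∑ v : Fin n → Bool,
        EMetric.diam (cg (clam d) '' {x | ∀ i : Fin n, x i = v i}) ^ d)
        ≤ ∑ _v : Fin n → Bool, ENNReal.ofReal ((1/2 : ℝ) ^ n) :=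
          Finset.sum_le_sum (fun v _ => hdiam v)
      _ = (Fintype.card (Fin n → Bool)) * ENNReal.ofReal ((1/2 : ℝ) ^ n) := by
          rw [Finset.sum_const, Finset.card_univ, nsmul_eq_mul]
      _ = 1 := by
          rw [Fintype.card_fun, Fintype.card_bool, Fintype.card_fin]
          rw [← ENNReal.ofReal_natCast, ← ENNReal.ofReal_mul (by positivity)]
          norm_num [← mul_pow]
  calc liminf (fun n => ∑ v : Fin n → Bool,
      EMetric.diam (cg (clam d) '' {x | ∀ i : Fin n, x i = v i}) ^ d) atTop
      ≤ liminf (fun _ : ℕ => (1 : ℝ≥0∞)) atTop :=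
        liminf_le_liminf (Eventually.of_forall hb)
    _ = 1 := liminf_const 1

lemma dimH_myCantor_le (hd0 : 0 < d) (hd1 : d < 1) : dimH (myCantor d) ≤ ENNReal.ofReal d := by
  have h := hausdorff_myCantor_le_one hd0 hd1
  have hne : μH[d] (myCantor d) ≠ ∞ := (h.trans_lt ENNReal.one_lt_top).ne
  have h2 := dimH_le_of_hausdorffMeasure_ne_top (d := d.toNNReal)
    (by rwa [Real.coe_toNNReal d hd0.le])
  rwa [ENNReal.ofReal]

end upper

section lower

variable {d : ℝ}

lemma dimH_myCantor_ge (hd0 : 0 < d) (hd1 : d < 1) : ENNReal.ofReal d ≤ dimH (myCantor d) := by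
  classical
  set lam := clam d with hlam
  have hl0 : 0 < lam := clam_pos hd0
  have hl2 : lam < 1/2 := clam_lt_half hd0 hd1
  have hl1 : lam < 1 := by linarith
  have hgap : (0:ℝ) < 1 - 2 * lam := by linarith
  have hinj : Function.Injective (cg lam) := cg_injective hl0 hl2
  set φ : ℝ → ℝ := fun t => cg (1/2) (Function.invFun (cg lam) t) with hφ
  have hφval : ∀ x : ℕ → Bool, φ (cg lam x) = cg (1/2) x := fun x =>
    congrArg (cg (1/2)) (Function.leftInverse_invFun hinj x)
  set Kr : ℝ := (1 - 2 * lam) ^ (-d) with hKr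
  have hKr0 : 0 ≤ Kr := (Real.rpow_pos_of_pos hgap _).le
  set p : ℝ≥0 := d.toNNReal with hp
  have hpd : (p : ℝ) = d := Real.coe_toNNReal d hd0.le
  have hp0 : 0 < p := Real.toNNReal_pos.2 hd0
  -- Hölder estimate
  have hH : HolderOnWith Kr.toNNReal p φ (myCantor d) := by
    rintro s ⟨x, rfl⟩ t ⟨y, rfl⟩
    rcases eq_or_ne x y with rfl | hne
    · simp
    have hex : ∃ n, x n ≠ y n := by
      by_contra hc
      push_neg at hc
      exact hne (funext hc)
    set k := Nat.find hex with hk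
    have hkk : x k ≠ y k := Nat.find_spec hex
    have hlt : ∀ i < k, x i = y i := fun i hi => by
      by_contra hc
      exact absurd (Nat.find_le hc) (not_le.2 hi)
    have hA : |cg (1/2) x - cg (1/2) y| ≤ (1/2:ℝ) ^ k :=
      cg_dist_le (by norm_num) (by norm_num) hlt
    have hB : (1 - 2*lam) * lam ^ k ≤ |cg lam x - cg lam y| := cg_dist_ge hl0 hl2 hkk hlt
    have hreal : |cg (1/2) x - cg (1/2) y| ≤ Kr * |cg lam x - cg lam y| ^ d := by
      have h1 : ((1:ℝ)/2) ^ k = (lam ^ k) ^ d := (clam_pow_rpow hd0 k).symm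
      have h2 : ((1 - 2*lam) * lam ^ k) ^ d = (1 - 2*lam) ^ d * (lam ^ k) ^ d :=
        Real.mul_rpow hgap.le (pow_nonneg hl0.le k)
      have h3 : ((1 - 2*lam) * lam ^ k) ^ d ≤ |cg lam x - cg lam y| ^ d :=
        Real.rpow_le_rpow (mul_nonneg hgap.le (pow_nonneg hl0.le k)) hB hd0.le
      have h4 : Kr * (1 - 2*lam) ^ d = 1 := by
        rw [hKr, ← Real.rpow_add hgap]
        simp
      calc |cg (1/2) x - cg (1/2) y| ≤ (lam ^ k) ^ d := h1 ▸ hA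
        _ = Kr * ((1 - 2*lam) ^ d * (lam ^ k) ^ d) := by
            rw [← mul_assoc, h4, one_mul]
        _ = Kr * ((1 - 2*lam) * lam ^ k) ^ d := by rw [h2]
        _ ≤ Kr * |cg lam x - cg lam y| ^ d := by
            exact mul_le_mul_of_nonneg_left h3 hKr0
    rw [hφval, hφval, edist_dist, edist_dist, Real.dist_eq, Real.dist_eq]
    calc ENNReal.ofReal |cg (1/2) x - cg (1/2) y|
        ≤ ENNReal.ofReal (Kr * |cg lam x - cg lam y| ^ d) := ENNReal.ofReal_le_ofReal hreal
      _ = ENNReal.ofReal Kr * ENNReal.ofReal (|cg lam x - cg lam y| ^ d) :=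
          ENNReal.ofReal_mul hKr0
      _ = (Kr.toNNReal : ℝ≥0∞) * ENNReal.ofReal |cg lam x - cg lam y| ^ (p : ℝ) := by
          rw [← ENNReal.ofReal_rpow_of_nonneg (abs_nonneg _) hd0.le, hpd]
          rfl
  have himg : Icc (0:ℝ) 1 ⊆ φ '' myCantor d := by
    intro t ht
    obtain ⟨x, hxt⟩ := cg_half_surjOn t ht
    exact ⟨cg lam x, mem_range_self x, by rw [hφval, hxt]⟩
  have hIcc : dimH (Icc (0:ℝ) 1) = 1 := by
    rw [Real.dimH_of_nonempty_interior (E := ℝ)]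
    · simp
    · rw [interior_Icc]
      exact ⟨1/2, by norm_num⟩
  have hchain : (1 : ℝ≥0∞) ≤ dimH (myCantor d) / p := by
    rw [← hIcc]
    exact (dimH_mono himg).trans (hH.dimH_image_le hp0)
  have hpne : (p : ℝ≥0∞) ≠ 0 := by
    simpa using hp0.ne'
  have hptop : (p : ℝ≥0∞) ≠ ∞ := ENNReal.coe_ne_top
  have : (p : ℝ≥0∞) ≤ dimH (myCantor d) := by
    calc (p : ℝ≥0∞) = 1 * p := (one_mul _).symm
      _ ≤ dimH (myCantor d) / p * p := mul_le_mul_left hchain _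
      _ = dimH (myCantor d) := ENNReal.div_mul_cancel hpne hptop
  rwa [ENNReal.ofReal]

lemma dimH_myCantor (hd0 : 0 < d) (hd1 : d < 1) : dimH (myCantor d) = ENNReal.ofReal d :=
  le_antisymm (dimH_myCantor_le hd0 hd1) (dimH_myCantor_ge hd0 hd1)

end lower

section pieces

noncomputable def ddim (r : ℝ) (k : ℕ) : ℝ := r * (((k:ℝ)+1) / ((k:ℝ)+2))

noncomputable def piece (r : ℝ) (k : ℕ) : Set ℝ :=
  (fun t => 2*(k:ℝ) + t) '' myCantor (ddim r k)

variable {r : ℝ} (hr0 : 0 < r) (hr1 : r ≤ 1)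

lemma ddim_pos (hr0 : 0 < r) (k : ℕ) : 0 < ddim r k := by
  apply mul_pos hr0
  positivity

lemma ddim_lt (hr0 : 0 < r) (k : ℕ) : ddim r k < r := by
  have h : ((k:ℝ)+1) / ((k:ℝ)+2) < 1 := by
    rw [div_lt_one (by positivity)]
    linarith
  calc ddim r k < r * 1 := by
        exact mul_lt_mul_of_pos_left h hr0
    _ = r := mul_one r

lemma ddim_lt_one (hr0 : 0 < r) (hr1 : r ≤ 1) (k : ℕ) : ddim r k < 1 :=
  (ddim_lt hr0 k).trans_le hr1

lemma isometry_translate (c : ℝ) : Isometry (fun t : ℝ => c + t) :=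
  Isometry.of_dist_eq fun a b => by
    rw [Real.dist_eq, Real.dist_eq]
    ring_nf

lemma dimH_piece (hr0 : 0 < r) (hr1 : r ≤ 1) (k : ℕ) :
    dimH (piece r k) = ENNReal.ofReal (ddim r k) := by
  rw [piece, (isometry_translate (2*(k:ℝ))).dimH_image,
    dimH_myCantor (ddim_pos hr0 k) (ddim_lt_one hr0 hr1 k)]

lemma piece_subset (hr0 : 0 < r) (hr1 : r ≤ 1) (k : ℕ) :
    piece r k ⊆ Icc (2*(k:ℝ)) (2*(k:ℝ)+1) := by
  rintro p ⟨t, ⟨x, rfl⟩, rfl⟩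
  have h0 : 0 < ddim r k := ddim_pos hr0 k
  have h1 : ddim r k < 1 := ddim_lt_one hr0 hr1 k
  have hl0 : 0 < clam (ddim r k) := clam_pos h0
  have hl1 : clam (ddim r k) < 1 := clam_lt_one h0 h1
  have hn := cg_nonneg hl0 hl1 x
  have ho := cg_le_one hl0 hl1 x
  constructor
  · show 2*(k:ℝ) ≤ 2*(k:ℝ) + cg (clam (ddim r k)) x
    linarith
  · show 2*(k:ℝ) + cg (clam (ddim r k)) x ≤ 2*(k:ℝ) + 1
    linarith

lemma piece_nonempty (k : ℕ) : (2*(k:ℝ)) ∈ piece r k := by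
  refine ⟨0, ⟨fun _ => false, ?_⟩, by ring⟩
  simp [cg]

lemma piece_eq_of_mem (hr0 : 0 < r) (hr1 : r ≤ 1) {p : ℝ} {k k' : ℕ}
    (h : p ∈ piece r k) (h' : p ∈ piece r k') : k = k' := by
  obtain ⟨h1, h2⟩ := piece_subset hr0 hr1 k h
  obtain ⟨h3, h4⟩ := piece_subset hr0 hr1 k' h'
  have e1 : 2*(k:ℝ) ≤ 2*(k':ℝ)+1 := le_trans h1 h4
  have e2 : 2*(k':ℝ) ≤ 2*(k:ℝ)+1 := le_trans h3 h2
  have e1' : 2*k ≤ 2*k'+1 := by exact_mod_cast e1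
  have e2' : 2*k' ≤ 2*k+1 := by exact_mod_cast e2
  omega

lemma volume_piece (hr0 : 0 < r) (hr1 : r ≤ 1) (k : ℕ) : volume (piece r k) = 0 := by
  have h : dimH (piece r k) < ((1:ℝ≥0) : ℝ≥0∞) := by
    rw [dimH_piece hr0 hr1 k]
    exact_mod_cast ENNReal.ofReal_lt_one.2 (ddim_lt_one hr0 hr1 k)
  have h0 := hausdorffMeasure_of_dimH_lt h
  rw [← MeasureTheory.hausdorffMeasure_real]
  simpa using h0

end pieces

section family

noncomputable def GFam (r : ℝ) (S : Set ℕ) : Set ℝ :=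
  (⋃ n, piece r (2*n+1)) ∪ ⋃ n ∈ S, piece r (2*n)

variable {r : ℝ}

lemma ddim_tendsto (hr0 : 0 < r) : Tendsto (fun m : ℕ => ddim r m) atTop (𝓝 r) := by
  have h0 : Tendsto (fun m : ℕ => 1/((m:ℝ)+2)) atTop (𝓝 0) := by
    have h := (tendsto_one_div_add_atTop_nhds_zero_nat (𝕜 := ℝ)).comp (tendsto_add_atTop_nat 1)
    have he : ((fun n : ℕ => 1 / ((n:ℝ) + 1)) ∘ fun n => n + 1)
        = fun m : ℕ => 1/((m:ℝ)+2) := by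
      funext m
      simp only [Function.comp_apply]
      push_cast
      ring_nf
    rwa [he] at h
  have h1 : Tendsto (fun m : ℕ => ((m:ℝ)+1)/((m:ℝ)+2)) atTop (𝓝 1) := by
    have he : (fun m : ℕ => ((m:ℝ)+1)/((m:ℝ)+2)) = fun m : ℕ => 1 - 1/((m:ℝ)+2) := by
      funext m
      have hm : ((m:ℝ)+2) ≠ 0 := by positivity
      field_simp
      ring
    rw [he]
    have := h0.const_sub 1
    simpa using this
  have := h1.const_mul r
  simpa [ddim] using this

lemma iSup_ddim (hr0 : 0 < r) :
    (⨆ n : ℕ, ENNReal.ofReal (ddim r (2*n+1))) = ENNReal.ofReal r := by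
  apply le_antisymm
  · exact iSup_le fun n => ENNReal.ofReal_le_ofReal (ddim_lt hr0 _).le
  · have ht : Tendsto (fun n : ℕ => ENNReal.ofReal (ddim r (2*n+1))) atTop
        (𝓝 (ENNReal.ofReal r)) := by
      apply (ENNReal.tendsto_ofReal (ddim_tendsto hr0)).comp
      apply tendsto_atTop_atTop.2
      exact fun b => ⟨b, fun a ha => by omega⟩
    exact le_of_tendsto ht (Eventually.of_forall fun n =>
      le_iSup (fun n => ENNReal.ofReal (ddim r (2*n+1))) n)

lemma dimH_GFam (hr0 : 0 < r) (hr1 : r ≤ 1) (S : Set ℕ) :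
    dimH (GFam r S) = ENNReal.ofReal r := by
  rw [GFam, dimH_union, dimH_iUnion, dimH_bUnion (Set.to_countable S)]
  simp_rw [dimH_piece hr0 hr1]
  rw [iSup_ddim hr0]
  have hb : (⨆ n ∈ S, ENNReal.ofReal (ddim r (2*n))) ≤ ENNReal.ofReal r :=
    iSup₂_le fun n _ => ENNReal.ofReal_le_ofReal (ddim_lt hr0 _).le
  exact max_eq_left hb

lemma volume_GFam (hr0 : 0 < r) (hr1 : r ≤ 1) (S : Set ℕ) : volume (GFam r S) = 0 := by
  apply measure_union_null
  · exact measure_iUnion_null fun n => volume_piece hr0 hr1 _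
  · exact measure_biUnion_null_iff (Set.to_countable S) |>.2 fun n _ => volume_piece hr0 hr1 _

lemma GFam_injective (hr0 : 0 < r) (hr1 : r ≤ 1) : Function.Injective (GFam r) := by
  have key : ∀ S T : Set ℕ, GFam r S = GFam r T → ∀ n ∈ S, n ∈ T := by
    intro S T h n hn
    have hp : (2*((2*n : ℕ):ℝ)) ∈ GFam r S :=
      Or.inr (mem_biUnion hn (piece_nonempty (2*n)))
    rw [h] at hp
    rcases hp with hp | hp
    · obtain ⟨m, hm⟩ := mem_iUnion.1 hp
      have := piece_eq_of_mem hr0 hr1 hm (piece_nonempty (2*n))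
      omega
    · obtain ⟨m, hmT, hm⟩ := mem_iUnion₂.1 hp
      have heq := piece_eq_of_mem hr0 hr1 hm (piece_nonempty (2*n))
      have : m = n := by omega
      rwa [← this]
  intro S T h
  exact Set.Subset.antisymm (fun n hn => key S T h n hn) (fun n hn => key T S h.symm n hn)

end family

section inddim

lemma interior_empty_of_volume_zero {F : Set ℝ} (hv : volume F = 0) : interior F = ∅ := by
  by_contra h
  have hne : (interior F).Nonempty := Set.nonempty_iff_ne_empty.2 h
  have hpos := isOpen_interior.measure_pos volume hne
  have hle : volume (interior F) ≤ volume F := measure_mono interior_subset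
  rw [hv] at hle
  exact absurd (le_antisymm hle zero_le) hpos.ne'

lemma indLE_one_of_interior_empty (F : Set ℝ) (hF : interior F = ∅) :
    IndLE 1 ↥F inferInstance := by
  classical
  show ∃ B : Set (Set ↥F), TopologicalSpace.IsTopologicalBasis B ∧
    ∀ U ∈ B, IndLE 0 ↥(frontier U) inferInstance
  refine ⟨{U : Set ↥F | ∃ a b : ℝ, a ∉ F ∧ b ∉ F ∧ U = (Subtype.val) ⁻¹' Ioo a b}, ?_, ?_⟩
  · apply TopologicalSpace.isTopologicalBasis_of_isOpen_of_nhds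
    · rintro U ⟨a, b, _, _, rfl⟩
      exact isOpen_Ioo.preimage continuous_subtype_val
    · intro x U hxU hU
      obtain ⟨W, hWopen, hWeq⟩ := isOpen_induced_iff.1 hU
      subst hWeq
      obtain ⟨ε, hε, hball⟩ := Metric.isOpen_iff.1 hWopen x.1 hxU
      have hsub : ∀ (c e : ℝ), c < e → ∃ a ∈ Ioo c e, a ∉ F := by
        intro c e hce
        by_contra hc
        push_neg at hc
        have hIF : Ioo c e ⊆ interior F :=
          interior_maximal hc isOpen_Ioo
        rw [hF] at hIF
        exact (Set.nonempty_Ioo.2 hce).ne_empty (Set.subset_empty_iff.1 hIF)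
      obtain ⟨a, ⟨ha1, ha2⟩, haF⟩ := hsub (x.1 - ε) x.1 (by linarith)
      obtain ⟨b, ⟨hb1, hb2⟩, hbF⟩ := hsub x.1 (x.1 + ε) (by linarith)
      refine ⟨Subtype.val ⁻¹' Ioo a b, ⟨a, b, haF, hbF, rfl⟩, ⟨ha2, hb1⟩, ?_⟩
      intro y hy
      apply hball
      obtain ⟨hy1, hy2⟩ := hy
      rw [Metric.mem_ball, Real.dist_eq, abs_lt]
      constructor <;> linarith
  · rintro U ⟨a, b, haF, hbF, rfl⟩
    have hopen : IsOpen (Subtype.val ⁻¹' Ioo a b : Set ↥F) :=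
      isOpen_Ioo.preimage continuous_subtype_val
    have hclosed : IsClosed (Subtype.val ⁻¹' Ioo a b : Set ↥F) := by
      have heq : (Subtype.val ⁻¹' Ioo a b : Set ↥F) = Subtype.val ⁻¹' Icc a b := by
        ext y
        simp only [mem_preimage, mem_Ioo, mem_Icc]
        constructor
        · rintro ⟨h1, h2⟩
          exact ⟨h1.le, h2.le⟩
        · rintro ⟨h1, h2⟩
          have hya : y.1 ≠ a := fun h => haF (h ▸ y.2)
          have hyb : y.1 ≠ b := fun h => hbF (h ▸ y.2)
          exact ⟨h1.lt_of_ne (Ne.symm hya), h2.lt_of_ne hyb⟩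
      rw [heq]
      exact isClosed_Icc.preimage continuous_subtype_val
    have hfr : frontier (Subtype.val ⁻¹' Ioo a b : Set ↥F) = ∅ :=
      IsClopen.frontier_eq ⟨hclosed, hopen⟩
    have : IsEmpty ↥(frontier (Subtype.val ⁻¹' Ioo a b : Set ↥F)) :=
      Set.isEmpty_coe_sort.2 hfr
    exact this

lemma indDim_zero_of_interior_empty (F : Set ℝ) (hF : interior F = ∅) : indDim ↥F = 0 := by
  refine le_antisymm ?_ zero_le
  have h1 := indLE_one_of_interior_empty F hF
  have h0 : (0:ℝ≥0∞) ∈ (fun k : ℕ => (k : ℝ≥0∞)) ''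
      {k : ℕ | IndLE (k + 1) ↥F inferInstance} := ⟨0, h1, by norm_num⟩
  exact sInf_le h0

end inddim

/-- For every `0 < r ≤ 1` there are continuum-many pairwise distinct
subsets of `ℝ`, each of Hausdorff dimension `r`, Lebesgue measure `0`, and topological
dimension `0`. -/
theorem continuum_many_thin_fractals (r : ℝ) (hr : r ∈ Set.Ioc (0 : ℝ) 1) :
    ∃ 𝒻 : Set (Set ℝ), Cardinal.mk ↥𝒻 = Cardinal.continuum ∧
      ∀ F ∈ 𝒻, dimH F = ENNReal.ofReal r ∧ volume F = 0 ∧ indDim ↥F = 0 := by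
  obtain ⟨hr0, hr1⟩ := hr
  refine ⟨Set.range (GFam r), ?_, ?_⟩
  · rw [Cardinal.mk_range_eq (GFam r) (GFam_injective hr0 hr1), Cardinal.mk_set,
      Cardinal.mk_nat, Cardinal.two_power_aleph0]
  · rintro F ⟨S, rfl⟩
    exact ⟨dimH_GFam hr0 hr1 S, volume_GFam hr0 hr1 S,
      indDim_zero_of_interior_empty _ (interior_empty_of_volume_zero (volume_GFam hr0 hr1 S))⟩
end

section
/- For any countable family {A_i} of subsets of ℝⁿ each with small inductive dimension ≤ 0 that are closed in their union (or more specifically, for a countable union of Cantor-type compact sets in ℝ), the union has small inductive dimension ≤ 0. -/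
open scoped ENNReal
open MeasureTheory Set

universe u

set_option linter.unusedSectionVars false
section Aux
open TopologicalSpace

/-- A space has a basis of clopen sets. -/
def HasClopenBasis (X : Type*) [TopologicalSpace X] : Prop :=
  ∃ B : Set (Set X), IsTopologicalBasis B ∧ ∀ U ∈ B, IsClopen U

lemma HasClopenBasis.of_homeomorph {X Y : Type*} [TopologicalSpace X] [TopologicalSpace Y]
    (e : X ≃ₜ Y) (h : HasClopenBasis Y) : HasClopenBasis X := by
  obtain ⟨B, hB, hclo⟩ := h
  refine ⟨(fun U => e ⁻¹' U) '' B, hB.isInducing e.isInducing, ?_⟩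
  rintro _ ⟨U, hU, rfl⟩
  exact (hclo U hU).preimage e.continuous

/-- In a second-countable zero-dimensional space, disjoint closed sets are
separated by a clopen set. -/
lemma clopen_separation_of_hasClopenBasis {Y : Type*} [TopologicalSpace Y]
    [SecondCountableTopology Y] (h : HasClopenBasis Y)
    {A B : Set Y} (hA : IsClosed A) (hB : IsClosed B) (hAB : Disjoint A B) :
    ∃ C : Set Y, IsClopen C ∧ A ⊆ C ∧ Disjoint C B := by
  obtain ⟨𝒞, hbasis, hclo⟩ := h
  rcases isEmpty_or_nonempty Y with hY | hY
  · exact ⟨∅, isClopen_empty, by simp [Set.eq_empty_of_isEmpty A], by simp⟩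
  have key : ∀ y : Y, ∃ C : Set Y, IsClopen C ∧ y ∈ C ∧ (Disjoint C A ∨ Disjoint C B) := by
    intro y
    have hy : y ∉ A ∨ y ∉ B := by
      by_contra hc
      push_neg at hc
      exact Set.disjoint_left.1 hAB hc.1 hc.2
    rcases hy with hy | hy
    · obtain ⟨U, hU𝒞, hyU, hUsub⟩ := hbasis.exists_subset_of_mem_open (by simpa using hy)
        hA.isOpen_compl
      exact ⟨U, hclo U hU𝒞, hyU, Or.inl (Set.disjoint_left.2 fun x hx => hUsub hx)⟩
    · obtain ⟨U, hU𝒞, hyU, hUsub⟩ := hbasis.exists_subset_of_mem_open (by simpa using hy)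
        hB.isOpen_compl
      exact ⟨U, hclo U hU𝒞, hyU, Or.inr (Set.disjoint_left.2 fun x hx => hUsub hx)⟩
  choose C hC1 hC2 hC3 using key
  obtain ⟨T, hTc, hTu⟩ := TopologicalSpace.isOpen_iUnion_countable C (fun y => (hC1 y).2)
  have huniv : ⋃ y ∈ T, C y = univ := by
    rw [hTu]
    exact eq_univ_of_forall fun x => mem_iUnion.2 ⟨x, hC2 x⟩
  have hTne : T.Nonempty := by
    rcases hY with ⟨y⟩
    by_contra hT
    rw [not_nonempty_iff_eq_empty] at hT
    simp [hT] at huniv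
    exact (huniv ▸ mem_univ y : y ∈ (∅ : Set Y))
  obtain ⟨e, he⟩ := hTc.exists_eq_range hTne
  have hcov : ∀ x : Y, ∃ k, x ∈ C (e k) := by
    intro x
    have : x ∈ ⋃ y ∈ T, C y := huniv ▸ mem_univ x
    rcases mem_iUnion₂.1 this with ⟨y, hyT, hxy⟩
    rw [he] at hyT
    rcases hyT with ⟨k, rfl⟩
    exact ⟨k, hxy⟩
  classical
  -- disjointified clopen pieces
  set D : ℕ → Set Y := fun k => C (e k) \ ⋃ j ∈ Finset.range k, C (e j) with hD
  have hDclo : ∀ k, IsClopen (D k) :=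
    fun k => ((hC1 (e k))).diff (Set.Finite.isClopen_biUnion (Finset.finite_toSet _)
      (fun j _ => hC1 (e j)))
  have hDmem : ∀ x : Y, x ∈ D (Nat.find (hcov x)) := by
    intro x
    refine ⟨Nat.find_spec (hcov x), ?_⟩
    intro hx
    rcases mem_iUnion₂.1 hx with ⟨j, hj, hxj⟩
    exact Nat.find_min (hcov x) (Finset.mem_range.1 hj) hxj
  have hDuniq : ∀ x : Y, ∀ k, x ∈ D k → k = Nat.find (hcov x) := by
    intro x k hk
    have h1 : Nat.find (hcov x) ≤ k := Nat.find_min' (hcov x) hk.1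
    rcases lt_or_eq_of_le h1 with h2 | h2
    · exact absurd (mem_iUnion₂.2 ⟨_, Finset.mem_range.2 h2, Nat.find_spec (hcov x)⟩) hk.2
    · exact h2.symm
  set U : Set Y := ⋃ k ∈ {k : ℕ | Disjoint (C (e k)) B}, D k with hU
  have hUopen : IsOpen U := isOpen_biUnion fun k _ => (hDclo k).2
  have hUcomp : Uᶜ = ⋃ k ∈ {k : ℕ | ¬ Disjoint (C (e k)) B}, D k := by
    ext x
    simp only [mem_compl_iff, hU, mem_iUnion₂, mem_setOf_eq]
    constructor
    · intro hx
      refine ⟨Nat.find (hcov x), ?_, hDmem x⟩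
      intro hd
      exact hx ⟨Nat.find (hcov x), hd, hDmem x⟩
    · rintro ⟨k, hk, hxk⟩ ⟨l, hl, hxl⟩
      exact hk ((hDuniq x k hxk).trans (hDuniq x l hxl).symm ▸ hl)
  have hUclosed : IsClosed U := by
    rw [← isOpen_compl_iff, hUcomp]
    exact isOpen_biUnion fun k _ => (hDclo k).2
  refine ⟨U, ⟨hUclosed, hUopen⟩, ?_, ?_⟩
  · intro a ha
    refine mem_iUnion₂.2 ⟨Nat.find (hcov a), ?_, hDmem a⟩
    rcases hC3 (e (Nat.find (hcov a))) with hd | hd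
    · exact absurd ha ((Set.disjoint_left.1 hd (Nat.find_spec (hcov a))))
    · exact hd
  · rw [Set.disjoint_left]
    intro x hx hxB
    rcases mem_iUnion₂.1 hx with ⟨k, hk, hxk⟩
    exact Set.disjoint_left.1 hk hxk.1 hxB

set_option linter.unusedSectionVars false


section Main
variable {X : Type*} [MetricSpace X] [SecondCountableTopology X]

/-- Disjoint closed sets are contained in opens with disjoint closures. -/
lemma strong_sep {P Q : Set X} (hP : IsClosed P) (hQ : IsClosed Q) (h : Disjoint P Q) :
    ∃ U V : Set X, IsOpen U ∧ IsOpen V ∧ P ⊆ U ∧ Q ⊆ V ∧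
      Disjoint (closure U) (closure V) := by
  obtain ⟨U', V', hU', hV', hPU', hQV', hUV'⟩ := NormalSpace.normal P Q hP hQ h
  obtain ⟨U, hU, hPU, hUc⟩ := normal_exists_closure_subset hP hU' hPU'
  obtain ⟨V, hV, hQV, hVc⟩ := normal_exists_closure_subset hQ hV' hQV'
  exact ⟨U, V, hU, hV, hPU, hQV,
    Set.disjoint_of_subset hUc hVc hUV'⟩

variable (F : ℕ → Set X)

lemma step_ex (hFc : ∀ k, IsClosed (F k)) (h0 : ∀ k, HasClopenBasis ↥(F k)) (k : ℕ) (U V : Set X)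
    (hd : Disjoint (closure U) (closure V)) :
    ∃ p : Set X × Set X, IsOpen p.1 ∧ IsOpen p.2 ∧ closure U ⊆ p.1 ∧ closure V ⊆ p.2 ∧
      Disjoint (closure p.1) (closure p.2) ∧ F k ⊆ p.1 ∪ p.2 := by
  -- separate inside the subspace F k
  set A' : Set ↥(F k) := Subtype.val ⁻¹' (closure U) with hA'
  set B' : Set ↥(F k) := Subtype.val ⁻¹' (closure V) with hB'
  have hA'c : IsClosed A' := isClosed_closure.preimage continuous_subtype_val
  have hB'c : IsClosed B' := isClosed_closure.preimage continuous_subtype_val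
  obtain ⟨C', hC'clo, hAC', hCB'⟩ := clopen_separation_of_hasClopenBasis (h0 k)
    hA'c hB'c (Disjoint.preimage _ hd)
  have hemb := (hFc k).isClosedEmbedding_subtypeVal
  set C : Set X := Subtype.val '' C' with hC
  set C2 : Set X := Subtype.val '' C'ᶜ with hC2
  have hCcl : IsClosed C := hemb.isClosedMap _ hC'clo.1
  have hC2cl : IsClosed C2 := hemb.isClosedMap _ hC'clo.2.isClosed_compl
  set P : Set X := closure U ∪ C with hP
  set Q : Set X := closure V ∪ C2 with hQ
  have hPQ : Disjoint P Q := by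
    rw [Set.disjoint_left]
    rintro x (hx | hx) (hy | hy)
    · exact Set.disjoint_left.1 hd hx hy
    · rcases hy with ⟨y, hyC, rfl⟩
      exact hyC (hAC' hx)
    · rcases hx with ⟨y, hyC, rfl⟩
      exact Set.disjoint_left.1 hCB' hyC hy
    · rcases hx with ⟨y, hyC, rfl⟩
      rcases hy with ⟨z, hzC, hz⟩
      exact hzC (Subtype.val_injective hz ▸ hyC)
  obtain ⟨U', V', hU', hV', hPU', hQV', hUV'⟩ :=
    strong_sep (isClosed_closure.union hCcl) (isClosed_closure.union hC2cl) hPQ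
  refine ⟨(U', V'), hU', hV', fun x hx => hPU' (Or.inl hx), fun x hx => hQV' (Or.inl hx),
    hUV', ?_⟩
  intro x hx
  by_cases hxC : (⟨x, hx⟩ : ↥(F k)) ∈ C'
  · exact Or.inl (hPU' (Or.inr ⟨⟨x, hx⟩, hxC, rfl⟩))
  · exact Or.inr (hQV' (Or.inr ⟨⟨x, hx⟩, hxC, rfl⟩))

lemma exists_seq (hFc : ∀ k, IsClosed (F k)) (h0 : ∀ k, HasClopenBasis ↥(F k)) {A B : Set X} (hA : IsClosed A) (hB : IsClosed B) (hd : Disjoint A B) :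
    ∃ u v : ℕ → Set X, (∀ k, IsOpen (u k)) ∧ (∀ k, IsOpen (v k)) ∧ A ⊆ u 0 ∧ B ⊆ v 0 ∧
      (∀ k, Disjoint (closure (u k)) (closure (v k))) ∧
      (∀ k, closure (u k) ⊆ u (k + 1)) ∧ (∀ k, closure (v k) ⊆ v (k + 1)) ∧
      (∀ k, F k ⊆ u (k + 1) ∪ v (k + 1)) := by
  classical
  obtain ⟨U0, V0, hU0, hV0, hAU0, hBV0, hd0⟩ := strong_sep hA hB hd
  let S := {p : Set X × Set X // IsOpen p.1 ∧ IsOpen p.2 ∧ Disjoint (closure p.1) (closure p.2)}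
  let step : ℕ → S → S := fun k p =>
    ⟨Classical.choose (step_ex F hFc h0 k p.1.1 p.1.2 p.2.2.2),
     (Classical.choose_spec (step_ex F hFc h0 k p.1.1 p.1.2 p.2.2.2)).1,
     (Classical.choose_spec (step_ex F hFc h0 k p.1.1 p.1.2 p.2.2.2)).2.1,
     (Classical.choose_spec (step_ex F hFc h0 k p.1.1 p.1.2 p.2.2.2)).2.2.2.2.1⟩
  let seq : ℕ → S := fun k => Nat.rec (⟨(U0, V0), hU0, hV0, hd0⟩ : S) step k
  have hseq : ∀ k, seq (k + 1) = step k (seq k) := fun k => rfl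
  refine ⟨fun k => (seq k).1.1, fun k => (seq k).1.2, fun k => (seq k).2.1,
    fun k => (seq k).2.2.1, hAU0, hBV0, fun k => (seq k).2.2.2, ?_, ?_, ?_⟩
  · intro k
    exact (Classical.choose_spec (step_ex F hFc h0 k (seq k).1.1 (seq k).1.2
      (seq k).2.2.2)).2.2.1
  · intro k
    exact (Classical.choose_spec (step_ex F hFc h0 k (seq k).1.1 (seq k).1.2
      (seq k).2.2.2)).2.2.2.1
  · intro k
    exact (Classical.choose_spec (step_ex F hFc h0 k (seq k).1.1 (seq k).1.2
      (seq k).2.2.2)).2.2.2.2.2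

/-- Main separation: disjoint closed sets in `X` are separated by a clopen set. -/
lemma main_sep (hFc : ∀ k, IsClosed (F k)) (h0 : ∀ k, HasClopenBasis ↥(F k))
    (hFu : ⋃ k, F k = univ) {A B : Set X} (hA : IsClosed A) (hB : IsClosed B) (hd : Disjoint A B) :
    ∃ U : Set X, IsClopen U ∧ A ⊆ U ∧ Disjoint U B := by
  obtain ⟨u, v, hu, hv, hAu, hBv, hdk, hucl, hvcl, hFk⟩ := exists_seq F hFc h0 hA hB hd
  have humono : Monotone u := monotone_nat_of_le_succ fun k =>
    (subset_closure).trans (hucl k)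
  have hvmono : Monotone v := monotone_nat_of_le_succ fun k =>
    (subset_closure).trans (hvcl k)
  set U : Set X := ⋃ k, u k with hU
  set V : Set X := ⋃ k, v k with hV
  have hUV : Disjoint U V := by
    rw [Set.disjoint_left]
    rintro x hxU hxV
    rcases mem_iUnion.1 hxU with ⟨j, hj⟩
    rcases mem_iUnion.1 hxV with ⟨k, hk⟩
    have h1 : x ∈ u (max j k) := humono (le_max_left j k) hj
    have h2 : x ∈ v (max j k) := hvmono (le_max_right j k) hk
    exact Set.disjoint_left.1 (hdk (max j k)) (subset_closure h1) (subset_closure h2)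
  have hcover : U ∪ V = univ := by
    apply eq_univ_of_forall
    intro x
    have : x ∈ ⋃ k, F k := hFu ▸ mem_univ x
    rcases mem_iUnion.1 this with ⟨k, hk⟩
    rcases hFk k hk with h | h
    · exact Or.inl (mem_iUnion.2 ⟨k + 1, h⟩)
    · exact Or.inr (mem_iUnion.2 ⟨k + 1, h⟩)
  have hUcomp : Uᶜ = V := by
    apply Set.Subset.antisymm
    · intro x hx
      rcases (hcover ▸ mem_univ x : x ∈ U ∪ V) with h | h
      · exact absurd h hx
      · exact h
    · exact fun x hx => Set.disjoint_right.1 hUV hx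
  refine ⟨U, ⟨?_, isOpen_iUnion hu⟩, fun a ha => mem_iUnion.2 ⟨0, hAu ha⟩, ?_⟩
  · rw [← isOpen_compl_iff, hUcomp]; exact isOpen_iUnion hv
  · exact Set.disjoint_left.2 fun x hx hxB => Set.disjoint_left.1 hUV hx
      (mem_iUnion.2 ⟨0, hBv hxB⟩)

lemma hasClopenBasis_of_closed_cover (hFc : ∀ k, IsClosed (F k))
    (h0 : ∀ k, HasClopenBasis ↥(F k)) (hFu : ⋃ k, F k = univ) : HasClopenBasis X := by
  refine ⟨{U : Set X | IsClopen U}, isTopologicalBasis_of_isOpen_of_nhds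
    (fun U hU => hU.2) ?_, fun U hU => hU⟩
  intro x W hxW hW
  have hx : IsClosed ({x} : Set X) := isClosed_singleton
  have hdisj : Disjoint ({x} : Set X) Wᶜ := by
    rw [Set.disjoint_left]
    rintro y rfl hy
    exact hy hxW
  obtain ⟨U, hUclo, hxU, hUW⟩ := main_sep F hFc h0 hFu hx hW.isClosed_compl hdisj
  exact ⟨U, hUclo, hxU rfl, fun y hy => by
    by_contra hyW
    exact Set.disjoint_left.1 hUW hy hyW⟩

end Main


/-- The preimage of `s ⊆ t` inside the subtype of `t` is homeomorphic to `s`. -/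
def restrictHomeo {α : Type*} [TopologicalSpace α] {s t : Set α} (h : s ⊆ t) :
    ↥(Subtype.val ⁻¹' s : Set ↥t) ≃ₜ ↥s where
  toFun x := ⟨x.1.1, x.2⟩
  invFun y := ⟨⟨y.1, h y.2⟩, y.2⟩
  left_inv x := rfl
  right_inv y := rfl
  continuous_toFun :=
    Continuous.subtype_mk (continuous_subtype_val.comp continuous_subtype_val) _
  continuous_invFun :=
    Continuous.subtype_mk (Continuous.subtype_mk continuous_subtype_val _) _

open TopologicalSpace in
lemma indDimLEZero_iff_hasClopenBasis (X : Type u) [t : TopologicalSpace X] :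
    IndDimLEZero X ↔ HasClopenBasis X := by
  show (∃ B : Set (Set X), TopologicalSpace.IsTopologicalBasis B ∧
      ∀ U ∈ B, IsEmpty ↥(frontier U)) ↔ _
  unfold HasClopenBasis
  refine exists_congr fun B => and_congr_right fun _ => forall₂_congr fun U _ => ?_
  rw [Set.isEmpty_coe_sort, ← isClopen_iff_frontier_eq_empty]

end Aux

/-- A countable union of subsets of `ℝⁿ`, each of small inductive
dimension `≤ 0` and closed in the union, has small inductive dimension `≤ 0`. -/
theorem indDimLEZero_iUnion (n : ℕ) (A : ℕ → Set (EuclideanSpace ℝ (Fin n)))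
    (h0 : ∀ i, IndDimLEZero ↥(A i))
    (hcl : ∀ i, IsClosed (Subtype.val ⁻¹' (A i) : Set ↥(⋃ j, A j))) :
    IndDimLEZero ↥(⋃ i, A i) := by
  rw [indDimLEZero_iff_hasClopenBasis]
  set X := ↥(⋃ i, A i)
  set F : ℕ → Set X := fun i => Subtype.val ⁻¹' (A i) with hF
  have hFu : ⋃ i, F i = Set.univ := by
    apply Set.eq_univ_of_forall
    intro x
    rcases Set.mem_iUnion.1 x.2 with ⟨i, hi⟩
    exact Set.mem_iUnion.2 ⟨i, hi⟩
  have h0' : ∀ i, HasClopenBasis ↥(F i) := by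
    intro i
    have hsub : A i ⊆ ⋃ j, A j := Set.subset_iUnion A i
    exact HasClopenBasis.of_homeomorph (restrictHomeo hsub)
      ((indDimLEZero_iff_hasClopenBasis _).1 (h0 i))
  exact hasClopenBasis_of_closed_cover F hcl h0' hFu
end
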